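/- Let C be a set of node features. For every d ≥ 0 there exists a single pattern value p_d (depending only on d and the common feature c) such that: for all integers n, m ≥ 3, if C_n and C_m are cycle graphs on n and m vertices respectively in which every vertex carries the same feature c ∈ C, then the d-pattern of every vertex of C_n and the d-pattern of every vertex of C_m both equal p_d. In particular, d-patterns cannot distinguish vertices of featureless cycle graphs of different sizes. -/
import Mathlib


/-- The type of `d`-patterns over a feature set `C`: a `0`-pattern is a raw feature,
and a `(d+1)`-pattern is a pair of a `d`-pattern together with a multiset of
`d`-patterns (the patterns of the neighbors). -/
def Pattern (C : Type) : ℕ → Type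
  | 0 => C
  | (d + 1) => Pattern C d × Multiset (Pattern C d)

/-- The `d`-pattern of a vertex `v` in a featured graph `(G, c)`:
the 0-pattern is the feature `c v`; the `(d+1)`-pattern pairs the `d`-pattern of `v`
with the multiset of `d`-patterns of the neighbors of `v`. -/
noncomputable def dPattern {V C : Type} [Fintype V] (G : SimpleGraph V) (c : V → C) :
    (d : ℕ) → V → Pattern C d
  | 0, v => c v
  | (d + 1), v =>
      letI := Classical.decRel G.Adj
      (dPattern G c d v, (G.neighborFinset v).val.map (dPattern G c d))

lemma cycle_nbr_aux (n : ℕ) (v : Fin (n + 3)) :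
    letI := Classical.decRel (SimpleGraph.cycleGraph (n + 3)).Adj
    (SimpleGraph.cycleGraph (n + 3)).neighborFinset v = {v - 1, v + 1} := by
  letI := Classical.decRel (SimpleGraph.cycleGraph (n + 3)).Adj
  ext w
  rw [SimpleGraph.mem_neighborFinset, ← SimpleGraph.mem_neighborSet,
    SimpleGraph.cycleGraph_neighborSet]
  simp

lemma cycle_sub_ne_add (n : ℕ) (v : Fin (n + 3)) : v - 1 ≠ v + 1 := by
  simp only [ne_eq, sub_eq_iff_eq_add, add_assoc v, left_eq_add]
  exact ne_of_beq_false rfl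

lemma dPattern_cycle_aux (C : Type) (c : C) :
    ∀ d : ℕ, ∃ p : Pattern C d, ∀ n : ℕ, ∀ v : Fin (n + 3),
      dPattern (SimpleGraph.cycleGraph (n + 3)) (fun _ => c) d v = p := by
  intro d
  induction d with
  | zero => exact ⟨c, fun n v => rfl⟩
  | succ d ih =>
    obtain ⟨p, hp⟩ := ih
    refine ⟨(p, Multiset.replicate 2 p), fun n v => ?_⟩
    show (_, _) = _
    have h1 : dPattern (SimpleGraph.cycleGraph (n + 3)) (fun _ => c) d v = p := hp n v
    have h2 := cycle_nbr_aux n v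
    refine Prod.ext h1 ?_
    dsimp only
    rw [h2]
    have hval : ({v - 1, v + 1} : Finset (Fin (n + 3))).val
        = (v - 1) ::ₘ (v + 1) ::ₘ 0 := by
      rw [show ({v - 1, v + 1} : Finset (Fin (n + 3))) = insert (v - 1) {v + 1} from rfl,
        Finset.insert_val_of_notMem (by simp [cycle_sub_ne_add n v])]
      rfl
    rw [hval]
    simp [hp n, Multiset.replicate_succ]


/-- For every `d ≥ 0` there is a single pattern value `p_d`
(depending only on `d` and the common feature `c`) such that for all `n, m ≥ 3`,
every vertex of the cycle graph `C_n` and every vertex of the cycle graph `C_m`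
(all vertices carrying the same feature `c`) has `d`-pattern equal to `p_d`:
d-patterns cannot distinguish vertices of featureless cycle graphs of different sizes. -/
theorem dPattern_cycleGraph_const (C : Type) (c : C) :
    ∀ d : ℕ, ∃ p : Pattern C d,
      ∀ n m : ℕ, 3 ≤ n → 3 ≤ m →
        (∀ v : Fin n, dPattern (SimpleGraph.cycleGraph n) (fun _ => c) d v = p) ∧
        (∀ w : Fin m, dPattern (SimpleGraph.cycleGraph m) (fun _ => c) d w = p) := by
  intro d
  obtain ⟨p, hp⟩ := dPattern_cycle_aux C c d
  refine ⟨p, fun n m hn hm => ?_⟩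
  obtain ⟨n, rfl⟩ := Nat.exists_eq_add_of_le hn
  obtain ⟨m, rfl⟩ := Nat.exists_eq_add_of_le hm
  rw [Nat.add_comm 3 n, Nat.add_comm 3 m]
  exact ⟨hp n, hp m⟩
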